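/- Let η : ℝ → ℝ^m and ω_g : ℝ → ℝ^{n_g} be differentiable and, together with a continuous input P_m : ℝ → ℝ^{n_g}, satisfy for all t: η̇(t) = B_gᵀ ω_g(t) + B_lᵀ D_l⁻¹(−B_l Γ sin(η(t)) − P_l) and M ω̇_g(t) = −D_g ω_g(t) − B_g Γ sin(η(t)) + P_m(t). Let constants (η̄, ω̄_g, P̄_m) satisfy 0 = B_gᵀ ω̄_g + B_lᵀ D_l⁻¹(−B_l Γ sin(η̄) − P_l) and 0 = −D_g ω̄_g − B_g Γ sin(η̄) + P̄_m, and set ω_l(t) = D_l⁻¹(−B_l Γ sin(η(t)) − P_l) and ω̄_l = D_l⁻¹(−B_l Γ sin(η̄) − P_l). Then for all t, d/dt U(η(t), ω_g(t)) = −(ω_g(t) − ω̄_g)ᵀ D_g (ω_g(t) − ω̄_g) − (ω_l(t) − ω̄_l)ᵀ D_l (ω_l(t) − ω̄_l) + (ω_g(t) − ω̄_g)ᵀ(P_m(t) − P̄_m). -/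

import Mathlib

/-- Incremental cyclo-passivity of the power network: along solutions, the
Bregman storage function `U` satisfies
`U̇ = −‖ω_g−ω̄_g‖²_{D_g} − ‖ω_l−ω̄_l‖²_{D_l} + (ω_g−ω̄_g)ᵀ(P_m−P̄_m)`. -/
theorem incremental_passivity_network {m ng nl : ℕ}
    (M Dg : Fin ng → ℝ) (Dl : Fin nl → ℝ) (γ : Fin m → ℝ)
    (Bg : Matrix (Fin ng) (Fin m) ℝ) (Bl : Matrix (Fin nl) (Fin m) ℝ)
    (Pl : Fin nl → ℝ)
    (hM : ∀ i, 0 < M i) (hDg : ∀ i, 0 < Dg i) (hDl : ∀ j, 0 < Dl j)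
    (hγ : ∀ k, 0 < γ k)
    (η : ℝ → Fin m → ℝ) (ωg : ℝ → Fin ng → ℝ) (Pm : ℝ → Fin ng → ℝ)
    (hPmcont : Continuous Pm)
    (ωl : ℝ → Fin nl → ℝ)
    -- ω_l = D_l⁻¹(−B_l Γ sin(η) − P_l) :
    (hωl : ∀ t j, ωl t j
      = (-(∑ k, Bl j k * (γ k * Real.sin (η t k))) - Pl j) / Dl j)
    -- η̇ = B_gᵀ ω_g + B_lᵀ D_l⁻¹(−B_l Γ sin(η) − P_l) :
    (hη : ∀ t, HasDerivAt η
      (fun k => (∑ i, Bg i k * ωg t i) + ∑ j, Bl j k * ωl t j) t)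
    -- M ω̇_g = −D_g ω_g − B_g Γ sin(η) + P_m :
    (hωg : ∀ t, HasDerivAt ωg
      (fun i => (-(Dg i * ωg t i)
        - (∑ k, Bg i k * (γ k * Real.sin (η t k))) + Pm t i) / M i) t)
    (ηb : Fin m → ℝ) (ωgb : Fin ng → ℝ) (Pmb : Fin ng → ℝ) (ωlb : Fin nl → ℝ)
    (hωlb : ∀ j, ωlb j
      = (-(∑ k, Bl j k * (γ k * Real.sin (ηb k))) - Pl j) / Dl j)
    -- 0 = B_gᵀ ω̄_g + B_lᵀ D_l⁻¹(−B_l Γ sin(η̄) − P_l) :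
    (hss1 : ∀ k, 0 = (∑ i, Bg i k * ωgb i) + ∑ j, Bl j k * ωlb j)
    -- 0 = −D_g ω̄_g − B_g Γ sin(η̄) + P̄_m :
    (hss2 : ∀ i, 0 = -(Dg i * ωgb i)
      - (∑ k, Bg i k * (γ k * Real.sin (ηb k))) + Pmb i)
    (U : (Fin m → ℝ) → (Fin ng → ℝ) → ℝ)
    (hU : ∀ e w, U e w = (1/2) * (∑ i, M i * (w i - ωgb i)^2)
      - (∑ k, γ k * Real.cos (e k)) + (∑ k, γ k * Real.cos (ηb k))
      - ∑ k, γ k * Real.sin (ηb k) * (e k - ηb k)) :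
    ∀ t, HasDerivAt (fun s => U (η s) (ωg s))
      (-(∑ i, Dg i * (ωg t i - ωgb i)^2) - (∑ j, Dl j * (ωl t j - ωlb j)^2)
        + ∑ i, (ωg t i - ωgb i) * (Pm t i - Pmb i)) t := by
  intro t
  have hMne : ∀ i, (M i) ≠ 0 := fun i => (hM i).ne'
  have hDlne : ∀ j, (Dl j) ≠ 0 := fun j => (hDl j).ne'
  -- componentwise derivatives
  have hηk : ∀ k, HasDerivAt (fun s => η s k)
      ((∑ i, Bg i k * ωg t i) + ∑ j, Bl j k * ωl t j) t :=
    fun k => hasDerivAt_pi.mp (hη t) k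
  have hωgi : ∀ i, HasDerivAt (fun s => ωg s i)
      ((-(Dg i * ωg t i) - (∑ k, Bg i k * (γ k * Real.sin (η t k))) + Pm t i) / M i) t :=
    fun i => hasDerivAt_pi.mp (hωg t) i
  set e' : Fin m → ℝ := fun k => (∑ i, Bg i k * ωg t i) + ∑ j, Bl j k * ωl t j with he'def
  set w' : Fin ng → ℝ := fun i =>
    (-(Dg i * ωg t i) - (∑ k, Bg i k * (γ k * Real.sin (η t k))) + Pm t i) / M i with hw'def
  -- derivative of the kinetic part
  have hA : HasDerivAt (fun s => (1/2) * (∑ i, M i * (ωg s i - ωgb i)^2))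
      ((1/2) * (∑ i, M i * (2 * (ωg t i - ωgb i) * w' i))) t := by
    apply HasDerivAt.const_mul
    apply HasDerivAt.fun_sum
    intro i _
    have h1 := (((hωgi i).sub_const (ωgb i)).fun_pow 2).const_mul (M i)
    convert h1 using 1
    · rfl
    simp [pow_one, hw'def]
  -- derivative of the cosine part
  have hB : HasDerivAt (fun s => ∑ k, γ k * Real.cos (η s k))
      (∑ k, γ k * (-Real.sin (η t k) * e' k)) t := by
    apply HasDerivAt.fun_sum
    intro k _
    exact ((Real.hasDerivAt_cos (η t k)).comp t (hηk k)).const_mul (γ k)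
  -- derivative of the linear part
  have hD : HasDerivAt (fun s => ∑ k, γ k * Real.sin (ηb k) * (η s k - ηb k))
      (∑ k, γ k * Real.sin (ηb k) * e' k) t := by
    apply HasDerivAt.fun_sum
    intro k _
    exact ((hηk k).sub_const (ηb k)).const_mul _
  have hD0 : HasDerivAt (fun s => U (η s) (ωg s))
      (((1/2) * (∑ i, M i * (2 * (ωg t i - ωgb i) * w' i))
        - ∑ k, γ k * (-Real.sin (η t k) * e' k))
        - ∑ k, γ k * Real.sin (ηb k) * e' k) t := by
    simp only [hU]
    exact ((hA.sub hB).add_const (∑ k, γ k * Real.cos (ηb k))).sub hD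
  -- e' in incremental form
  have he' : ∀ k, e' k = (∑ i, Bg i k * (ωg t i - ωgb i))
      + ∑ j, Bl j k * (ωl t j - ωlb j) := by
    intro k
    have h := hss1 k
    simp only [he'def, mul_sub, Finset.sum_sub_distrib]
    linarith
  -- key identity for the load part
  have hBl : ∀ j, (∑ k, Bl j k * (γ k * (Real.sin (η t k) - Real.sin (ηb k))))
      = -(Dl j * (ωl t j - ωlb j)) := by
    intro j
    have h1 : Dl j * ωl t j = -(∑ k, Bl j k * (γ k * Real.sin (η t k))) - Pl j := by
      rw [hωl t j, mul_div_cancel₀ _ (hDlne j)]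
    have h2 : Dl j * ωlb j = -(∑ k, Bl j k * (γ k * Real.sin (ηb k))) - Pl j := by
      rw [hωlb j, mul_div_cancel₀ _ (hDlne j)]
    simp only [mul_sub, Finset.sum_sub_distrib]
    linear_combination h1 - h2
  -- kinetic part simplification
  have hA' : (1/2) * (∑ i, M i * (2 * (ωg t i - ωgb i) * w' i))
      = ∑ i, (ωg t i - ωgb i) * (-(Dg i * ωg t i)
        - (∑ k, Bg i k * (γ k * Real.sin (η t k))) + Pm t i) := by
    rw [Finset.mul_sum]
    refine Finset.sum_congr rfl fun i _ => ?_
    have hMw : M i * w' i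
        = -(Dg i * ωg t i) - (∑ k, Bg i k * (γ k * Real.sin (η t k))) + Pm t i := by
      simp only [hw'def]
      rw [mul_div_cancel₀ _ (hMne i)]
    calc (1/2) * (M i * (2 * (ωg t i - ωgb i) * w' i))
        = (ωg t i - ωgb i) * (M i * w' i) := by ring
      _ = _ := by rw [hMw]
  have hA'' : ∑ i, (ωg t i - ωgb i) * (-(Dg i * ωg t i)
        - (∑ k, Bg i k * (γ k * Real.sin (η t k))) + Pm t i)
      = -(∑ i, Dg i * (ωg t i - ωgb i)^2)
        + (∑ i, (ωg t i - ωgb i) * (Pm t i - Pmb i))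
        - ∑ i, (ωg t i - ωgb i) * (∑ k, Bg i k * (γ k * (Real.sin (η t k) - Real.sin (ηb k)))) := by
    rw [← Finset.sum_neg_distrib, ← Finset.sum_add_distrib, ← Finset.sum_sub_distrib]
    refine Finset.sum_congr rfl fun i _ => ?_
    have hsplit : (∑ k, Bg i k * (γ k * (Real.sin (η t k) - Real.sin (ηb k))))
        = (∑ k, Bg i k * (γ k * Real.sin (η t k))) - ∑ k, Bg i k * (γ k * Real.sin (ηb k)) := by
      rw [← Finset.sum_sub_distrib]
      exact Finset.sum_congr rfl fun k _ => by ring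
    linear_combination -(ωg t i - ωgb i) * hss2 i + (ωg t i - ωgb i) * hsplit
  -- potential part simplification
  have hC : (- ∑ k, γ k * (-Real.sin (η t k) * e' k))
        - ∑ k, γ k * Real.sin (ηb k) * e' k
      = ∑ k, (γ k * (Real.sin (η t k) - Real.sin (ηb k))) * e' k := by
    rw [← Finset.sum_neg_distrib, ← Finset.sum_sub_distrib]
    refine Finset.sum_congr rfl fun k _ => ?_
    ring
  have hgsum : (∑ k, ∑ i, Bg i k * (ωg t i - ωgb i) * (γ k * (Real.sin (η t k) - Real.sin (ηb k))))
      = ∑ i, (ωg t i - ωgb i) * (∑ k, Bg i k * (γ k * (Real.sin (η t k) - Real.sin (ηb k)))) := by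
    rw [Finset.sum_comm]
    refine Finset.sum_congr rfl fun i _ => ?_
    rw [Finset.mul_sum]
    exact Finset.sum_congr rfl fun k _ => by ring
  have hlsum : (∑ k, ∑ j, Bl j k * (ωl t j - ωlb j) * (γ k * (Real.sin (η t k) - Real.sin (ηb k))))
      = -∑ j, Dl j * (ωl t j - ωlb j)^2 := by
    rw [Finset.sum_comm, ← Finset.sum_neg_distrib]
    refine Finset.sum_congr rfl fun j _ => ?_
    have h3 : (∑ k, Bl j k * (ωl t j - ωlb j) * (γ k * (Real.sin (η t k) - Real.sin (ηb k))))
        = (ωl t j - ωlb j) * ∑ k, Bl j k * (γ k * (Real.sin (η t k) - Real.sin (ηb k))) := by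
      rw [Finset.mul_sum]
      exact Finset.sum_congr rfl fun k _ => by ring
    rw [h3, hBl j]
    ring
  have hC' : ∑ k, (γ k * (Real.sin (η t k) - Real.sin (ηb k))) * e' k
      = (∑ i, (ωg t i - ωgb i) * (∑ k, Bg i k * (γ k * (Real.sin (η t k) - Real.sin (ηb k)))))
        - ∑ j, Dl j * (ωl t j - ωlb j)^2 := by
    have step1 : ∑ k, (γ k * (Real.sin (η t k) - Real.sin (ηb k))) * e' k
        = (∑ k, ∑ i, Bg i k * (ωg t i - ωgb i) * (γ k * (Real.sin (η t k) - Real.sin (ηb k))))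
          + ∑ k, ∑ j, Bl j k * (ωl t j - ωlb j) * (γ k * (Real.sin (η t k) - Real.sin (ηb k))) := by
      rw [← Finset.sum_add_distrib]
      refine Finset.sum_congr rfl fun k _ => ?_
      rw [he' k, ← Finset.sum_mul, ← Finset.sum_mul]
      ring
    rw [step1, hgsum, hlsum]
    ring
  have hfinal : (((1/2) * (∑ i, M i * (2 * (ωg t i - ωgb i) * w' i))
        - ∑ k, γ k * (-Real.sin (η t k) * e' k))
        - ∑ k, γ k * Real.sin (ηb k) * e' k)
      = -(∑ i, Dg i * (ωg t i - ωgb i)^2) - (∑ j, Dl j * (ωl t j - ωlb j)^2)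
        + ∑ i, (ωg t i - ωgb i) * (Pm t i - Pmb i) := by
    have hx : (((1/2) * (∑ i, M i * (2 * (ωg t i - ωgb i) * w' i))
        - ∑ k, γ k * (-Real.sin (η t k) * e' k))
        - ∑ k, γ k * Real.sin (ηb k) * e' k)
      = ((1/2) * (∑ i, M i * (2 * (ωg t i - ωgb i) * w' i)))
        + (((- ∑ k, γ k * (-Real.sin (η t k) * e' k))
          - ∑ k, γ k * Real.sin (ηb k) * e' k)) := by ring
    rw [hx, hA', hA'', hC, hC']
    ring
  exact hfinal ▸ hD0
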